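/- Let u, v, ξ ∈ ℂⁿ (n ≥ 2), α ≥ 0, and 1 ≤ p ≤ ∞ with conjugate exponent q. If v has pairwise distinct coordinates and |uᵢ - ξᵢ| ≤ α |vᵢ - ξᵢ| for all i, then for all i ≠ j, |uᵢ - uⱼ| ≥ (1 - 2^{1/q}(1 + α) ‖(v - ξ)/d(v)‖_p) |vᵢ - vⱼ|. -/

import Mathlib

open scoped ENNReal

noncomputable def pnorm (p : ℝ≥0∞) {n : ℕ} (w : Fin n → ℝ) : ℝ :=
  ‖(WithLp.equiv p (Fin n → ℝ)).symm w‖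

noncomputable def dmin {n : ℕ} (v : Fin n → ℂ) (i : Fin n) : ℝ :=
  ⨅ j : {j : Fin n // j ≠ i}, ‖v i - v j.1‖

lemma dmin_le {n : ℕ} (v : Fin n → ℂ) (i j : Fin n) (h : j ≠ i) :
    dmin v i ≤ ‖v i - v j‖ := by
  have : BddBelow (Set.range fun j : {j : Fin n // j ≠ i} =>
      ‖v i - v j.1‖) := Set.Finite.bddBelow (Set.finite_range _)
  exact ciInf_le this ⟨j, h⟩

lemma dmin_pos {n : ℕ} (hn : 2 ≤ n) (v : Fin n → ℂ) (hv : Function.Injective v)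
    (i : Fin n) : 0 < dmin v i := by
  haveI : Nontrivial (Fin n) := Fin.nontrivial_iff_two_le.mpr hn
  obtain ⟨j, hj⟩ := exists_ne i
  haveI : Nonempty {j : Fin n // j ≠ i} := ⟨⟨j, hj⟩⟩
  obtain ⟨k, hk⟩ := Finite.exists_min (fun j : {j : Fin n // j ≠ i} =>
    ‖v i - v j.1‖)
  have hpos : 0 < ‖v i - v k.1‖ := by
    have : v i ≠ v k.1 := fun h => k.2 (hv h.symm)
    simpa [sub_eq_zero] using this
  exact lt_of_lt_of_le hpos (le_ciInf hk)

lemma pair_le_pnorm (n : ℕ) (w : Fin n → ℝ) (hw : ∀ k, 0 ≤ w k) (p q : ℝ≥0∞)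
    (hp : 1 ≤ p) (hpq : 1/p + 1/q = 1) (i j : Fin n) (hij : i ≠ j) :
    w i + w j ≤ (2:ℝ) ^ (1/q).toReal * pnorm p w := by
  have hwnorm : ∀ k, ‖((WithLp.equiv p (Fin n → ℝ)).symm w) k‖ = w k := fun k => by
    simp [Real.norm_eq_abs, abs_of_nonneg (hw k)]
  rcases eq_or_ne p ∞ with hptop | hptop
  · -- p = ∞ : q = 1, factor is 2
    subst hptop
    have hq : q = 1 := by
      have : 1/q = 1 := by simpa using hpq
      simpa [one_div, ENNReal.inv_eq_one] using this
    subst hq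
    have hnorm : pnorm ∞ w = ⨆ k, ‖((WithLp.equiv ∞ (Fin n → ℝ)).symm w) k‖ :=
      PiLp.norm_eq_ciSup _
    have hbdd : BddAbove (Set.range fun k =>
        ‖((WithLp.equiv ∞ (Fin n → ℝ)).symm w) k‖) :=
      Set.Finite.bddAbove (Set.finite_range _)
    have hi : w i ≤ pnorm ∞ w := by
      rw [hnorm, ← hwnorm i]; exact le_ciSup hbdd i
    have hj : w j ≤ pnorm ∞ w := by
      rw [hnorm, ← hwnorm j]; exact le_ciSup hbdd j
    have : ((1:ℝ≥0∞)/1).toReal = 1 := by norm_num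
    rw [this, Real.rpow_one]
    linarith
  · -- p finite
    have hpne0 : p ≠ 0 := by
      intro h; rw [h] at hp; exact absurd hp (by simp)
    have hpt1 : 1 ≤ p.toReal := by
      have := ENNReal.toReal_mono hptop hp
      simpa using this
    set pt := p.toReal with hpt
    have hpt0 : 0 < pt := lt_of_lt_of_le one_pos hpt1
    have hinvp_ne_top : 1/p ≠ ∞ := by
      simp [one_div, ENNReal.inv_ne_top, hpne0]
    have hq_eq : 1/q = 1 - 1/p := by
      have := hpq
      rw [add_comm] at this
      exact ENNReal.eq_sub_of_add_eq hinvp_ne_top this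
    have hinvp_le : 1/p ≤ 1 := by
      rw [one_div]
      exact ENNReal.inv_le_one.mpr hp
    have hqt : (1/q).toReal = 1 - 1/pt := by
      rw [hq_eq, ENNReal.toReal_sub_of_le hinvp_le (by simp)]
      simp [one_div, ENNReal.toReal_inv]
      rfl
    rw [hqt]
    have hnorm : pnorm p w =
        (∑ k, ‖((WithLp.equiv p (Fin n → ℝ)).symm w) k‖ ^ pt) ^ (1/pt) :=
      PiLp.norm_eq_sum hpt0 _
    simp only [hwnorm] at hnorm
    set S : ℝ := ∑ k, w k ^ pt with hS
    have hS_nonneg : 0 ≤ S := Finset.sum_nonneg fun k _ => Real.rpow_nonneg (hw k) _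
    have h1 : w i ^ pt + w j ^ pt ≤ S := by
      have hsub : ({i, j} : Finset (Fin n)) ⊆ Finset.univ := Finset.subset_univ _
      have := Finset.sum_le_sum_of_subset_of_nonneg hsub
        (fun k _ _ => Real.rpow_nonneg (hw k) pt)
      rwa [Finset.sum_pair hij] at this
    -- key convexity inequality, via NNReal
    have h2 : (w i + w j) ^ pt ≤ (2:ℝ) ^ (pt - 1) * (w i ^ pt + w j ^ pt) := by
      have := NNReal.rpow_add_le_mul_rpow_add_rpow ⟨w i, hw i⟩ ⟨w j, hw j⟩ hpt1
      have h' := NNReal.coe_le_coe.mpr this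
      push_cast [NNReal.coe_rpow] at h'
      convert h' using 3 <;> rfl
    have h3 : (w i + w j) ^ pt ≤ (2:ℝ) ^ (pt - 1) * S := by
      have h2' : (2:ℝ) ^ (pt - 1) * (w i ^ pt + w j ^ pt) ≤ (2:ℝ) ^ (pt - 1) * S :=
        mul_le_mul_of_nonneg_left h1 (Real.rpow_nonneg (by norm_num) _)
      linarith
    have hab : 0 ≤ w i + w j := add_nonneg (hw i) (hw j)
    have h4 : w i + w j ≤ ((2:ℝ) ^ (pt - 1) * S) ^ (1/pt) := by
      rw [one_div]
      have := Real.rpow_le_rpow (Real.rpow_nonneg hab pt) h3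
        (by positivity : (0:ℝ) ≤ pt⁻¹)
      rwa [Real.rpow_rpow_inv hab (ne_of_gt hpt0)] at this
    have h5 : ((2:ℝ) ^ (pt - 1) * S) ^ (1/pt)
        = (2:ℝ) ^ (1 - 1/pt) * S ^ (1/pt) := by
      rw [Real.mul_rpow (Real.rpow_nonneg (by norm_num) _) hS_nonneg,
        ← Real.rpow_mul (by norm_num : (0:ℝ) ≤ 2)]
      congr 2
      field_simp
    rw [hnorm]
    calc w i + w j ≤ ((2:ℝ) ^ (pt - 1) * S) ^ (1/pt) := h4
      _ = (2:ℝ) ^ (1 - 1/pt) * S ^ (1/pt) := h5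

theorem u_u_xi_alpha_inequality (n : ℕ) (hn : 2 ≤ n) (u v ξ : Fin n → ℂ)
    (α : ℝ) (hα : 0 ≤ α) (hv : Function.Injective v)
    (p q : ℝ≥0∞) (hp : 1 ≤ p) (hpq : 1/p + 1/q = 1)
    (hu : ∀ i, ‖u i - ξ i‖ ≤ α * ‖v i - ξ i‖) :
    ∀ i j : Fin n, i ≠ j →
      (1 - (2:ℝ) ^ (1/q).toReal * (1 + α) *
            pnorm p (fun k => ‖v k - ξ k‖ / dmin v k))
          * ‖v i - v j‖
        ≤ ‖u i - u j‖ := by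
  intro i j hij
  set w : Fin n → ℝ := fun k => ‖v k - ξ k‖ / dmin v k with hw
  have hd : ∀ k, 0 < dmin v k := dmin_pos hn v hv
  have hwnn : ∀ k, 0 ≤ w k := fun k => div_nonneg (norm_nonneg _) (hd k).le
  set A := ‖v i - v j‖ with hA
  have hA0 : 0 ≤ A := norm_nonneg _
  set si := ‖v i - ξ i‖ with hsi
  set sj := ‖v j - ξ j‖ with hsj
  -- triangle inequalities
  have h1 : A ≤ ‖v i - u i‖ + ‖u i - u j‖
      + ‖u j - v j‖ := by
    calc A ≤ ‖v i - u i‖ + ‖u i - v j‖ :=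
          norm_sub_le_norm_sub_add_norm_sub _ _ _
      _ ≤ ‖v i - u i‖
          + (‖u i - u j‖ + ‖u j - v j‖) := by
          gcongr
          exact norm_sub_le_norm_sub_add_norm_sub _ _ _
      _ = _ := by ring
  have h2 : ‖v i - u i‖ ≤ (1 + α) * si := by
    calc ‖v i - u i‖
        ≤ ‖v i - ξ i‖ + ‖ξ i - u i‖ := norm_sub_le_norm_sub_add_norm_sub _ _ _
      _ = si + ‖u i - ξ i‖ := by
          rw [norm_sub_rev (ξ i) (u i)]
      _ ≤ si + α * si := by have := hu i; linarith
      _ = (1 + α) * si := by ring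
  have h3 : ‖u j - v j‖ ≤ (1 + α) * sj := by
    calc ‖u j - v j‖
        ≤ ‖u j - ξ j‖ + ‖ξ j - v j‖ := norm_sub_le_norm_sub_add_norm_sub _ _ _
      _ = ‖u j - ξ j‖ + sj := by
          rw [norm_sub_rev (ξ j) (v j)]
      _ ≤ α * sj + sj := by have := hu j; linarith
      _ = (1 + α) * sj := by ring
  have h4 : si ≤ w i * A := by
    have hdle : dmin v i ≤ A := dmin_le v i j hij.symm
    have : si = w i * dmin v i := by
      show si = ‖v i - ξ i‖ / dmin v i * dmin v i
      rw [div_mul_cancel₀ _ (ne_of_gt (hd i))]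
    rw [this]
    exact mul_le_mul_of_nonneg_left hdle (hwnn i)
  have h5 : sj ≤ w j * A := by
    have hdle : dmin v j ≤ A := by
      have := dmin_le v j i hij
      rwa [norm_sub_rev] at this
    have : sj = w j * dmin v j := by
      show sj = ‖v j - ξ j‖ / dmin v j * dmin v j
      rw [div_mul_cancel₀ _ (ne_of_gt (hd j))]
    rw [this]
    exact mul_le_mul_of_nonneg_left hdle (hwnn j)
  have h6 : w i + w j ≤ (2:ℝ) ^ (1/q).toReal * pnorm p w :=
    pair_le_pnorm n w hwnn p q hp hpq i j hij
  have h1α : (0:ℝ) ≤ 1 + α := by linarith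
  have key : (w i + w j) * ((1 + α) * A)
      ≤ ((2:ℝ) ^ (1/q).toReal * pnorm p w) * ((1 + α) * A) :=
    mul_le_mul_of_nonneg_right h6 (mul_nonneg h1α hA0)
  have h4' : (1 + α) * si ≤ (1 + α) * (w i * A) := mul_le_mul_of_nonneg_left h4 h1α
  have h5' : (1 + α) * sj ≤ (1 + α) * (w j * A) := mul_le_mul_of_nonneg_left h5 h1α
  nlinarith [h1, h2, h3, key, h4', h5']
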